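/- Let Γ be an oriented graph all of whose weakly connected components are isomorphic to one fixed homogeneous tournament T. Then Γ is homomorphism homogeneous. -/

import Mathlib

def IsOriented {V : Type*} (E : V → V → Prop) : Prop := ∀ x y, E x y → ¬ E y x

def IsLocHom {V : Type*} (E : V → V → Prop) (A : Finset V) (f : V → V) : Prop :=
  ∀ x ∈ A, ∀ y ∈ A, E x y → E (f x) (f y)

def IsHH {V : Type*} (E : V → V → Prop) : Prop :=
  ∀ (A : Finset V) (f : V → V), IsLocHom E A f →
    ∃ g : V → V, (∀ x y, E x y → E (g x) (g y)) ∧ ∀ x ∈ A, g x = f x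

theorem union_of_homogeneous_tournament_HH {V T : Type*}
    (E : V → V → Prop) (ET : T → T → Prop)
    (horV : IsOriented E) (horT : IsOriented ET)
    (htour : ∀ s t : T, s ≠ t → ET s t ∨ ET t s)
    (hhom : ∀ (A : Finset T) (f : T → T), Set.InjOn f A →
      (∀ x ∈ A, ∀ y ∈ A, (ET x y ↔ ET (f x) (f y))) →
      ∃ g : T ≃ T, (∀ x y, ET x y ↔ ET (g x) (g y)) ∧ ∀ x ∈ A, g x = f x)
    (hcomp : ∀ v : V, ∃ φ : T → V,
      Function.Injective φ ∧
      (∀ t : T, Relation.ReflTransGen (fun a b => E a b ∨ E b a) v (φ t)) ∧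
      (∀ w : V, Relation.ReflTransGen (fun a b => E a b ∨ E b a) v w → ∃ t, φ t = w) ∧
      (∀ s t : T, ET s t ↔ E (φ s) (φ t))) :
    IsHH E := by
  classical
  intro A f hf
  set R : V → V → Prop := Relation.ReflTransGen (fun a b => E a b ∨ E b a) with hRdef
  have hRsymm : ∀ {x y}, R x y → R y x := fun {x y} h =>
    (@Relation.ReflTransGen.symmetric _ _ ⟨fun a b hab => hab.symm⟩).symm _ _ h
  have hirrV : ∀ x, ¬ E x x := fun x h => horV x x h h
  have hirrT : ∀ x, ¬ ET x x := fun x h => horT x x h h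
  choose φ hinj hto hsurj hiff using hcomp
  choose inv hinvspec using hsurj
  -- any two vertices in the same component are equal or adjacent
  have hadj : ∀ x y, R x y → x = y ∨ E x y ∨ E y x := by
    intro x y hxy
    obtain ⟨s, hs⟩ := (⟨inv x x Relation.ReflTransGen.refl,
      hinvspec x x Relation.ReflTransGen.refl⟩ : ∃ t, φ x t = x)
    obtain ⟨t, ht⟩ := (⟨inv x y hxy, hinvspec x y hxy⟩ : ∃ t, φ x t = y)
    by_cases hst : s = t
    · left; rw [← hs, ← ht, hst]
    · rcases htour s t hst with h | h
      · right; left; rw [← hs, ← ht]; exact (hiff x s t).mp h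
      · right; right; rw [← hs, ← ht]; exact (hiff x t s).mp h
  have hRf : ∀ x ∈ A, ∀ y ∈ A, R x y → R (f x) (f y) := by
    intro x hx y hy hxy
    rcases hadj x y hxy with h | h | h
    · rw [h]
    · exact Relation.ReflTransGen.single (Or.inl (hf x hx y hy h))
    · exact Relation.ReflTransGen.single (Or.inr (hf y hy x hx h))
  -- canonical representative of A in the component of v
  set rep : V → Option V := fun v => A.toList.find? (fun a => decide (R a v)) with hrepdef
  have hrep_spec : ∀ v a, rep v = some a → a ∈ A ∧ R a v := by
    intro v a h
    have h' : A.toList.find? (fun a => decide (R a v)) = some a := h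
    have h2 := List.find?_some h'
    exact ⟨Finset.mem_toList.mp (List.mem_of_find?_eq_some h'),
      of_decide_eq_true h2⟩
  have hrep_mem : ∀ x ∈ A, ∃ a, rep x = some a := by
    intro x hx
    cases hh : rep x with
    | some a => exact ⟨a, rfl⟩
    | none =>
      have hh' : A.toList.find? (fun a => decide (R a x)) = none := hh
      exact absurd (decide_eq_true (Relation.ReflTransGen.refl))
        (by simpa using List.find?_eq_none.mp hh' x (Finset.mem_toList.mpr hx))
  have hrep_congr : ∀ v w, R v w → rep v = rep w := by
    intro v w hvw
    show A.toList.find? _ = A.toList.find? _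
    congr 1
    funext a
    exact decide_eq_decide.mpr ⟨fun h => h.trans hvw, fun h => h.trans (hRsymm hvw)⟩
  -- the induced local map on T
  set F : V → T → T := fun a t =>
    if h : ∃ s, φ (f a) s = f (φ a t) then h.choose else t with hFdef
  have hF : ∀ a t, R (f a) (f (φ a t)) → φ (f a) (F a t) = f (φ a t) := by
    intro a t h
    have hex : ∃ s, φ (f a) s = f (φ a t) := ⟨inv (f a) _ h, hinvspec (f a) _ h⟩
    show φ (f a) (if h : ∃ s, φ (f a) s = f (φ a t) then h.choose else t) = f (φ a t)
    rw [dif_pos hex]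
    exact hex.choose_spec
  have hFA : ∀ a ∈ A, ∀ t, φ a t ∈ A → φ (f a) (F a t) = f (φ a t) :=
    fun a ha t ht => hF a t (hRf a ha (φ a t) ht (hto a t))
  -- the extending automorphism of T on each relevant component
  have hσex : ∀ a : V, ∃ σ : T ≃ T, (∀ x y, ET x y ↔ ET (σ x) (σ y)) ∧
      (a ∈ A → ∀ t, φ a t ∈ A → σ t = F a t) := by
    intro a
    by_cases ha : a ∈ A
    · set B : Finset T := A.preimage (φ a) (fun x _ y _ h => hinj a h) with hB
      have hmem : ∀ t, t ∈ B ↔ φ a t ∈ A := fun t => Finset.mem_preimage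
      have hETF : ∀ s ∈ B, ∀ t ∈ B, ET s t → ET (F a s) (F a t) := by
        intro s hs t ht hst
        have h2 : E (f (φ a s)) (f (φ a t)) :=
          hf _ ((hmem s).mp hs) _ ((hmem t).mp ht) ((hiff a s t).mp hst)
        rw [← hFA a ha s ((hmem s).mp hs), ← hFA a ha t ((hmem t).mp ht)] at h2
        exact (hiff (f a) _ _).mpr h2
      have hiffF : ∀ s ∈ B, ∀ t ∈ B, (ET s t ↔ ET (F a s) (F a t)) := by
        intro s hs t ht
        constructor
        · exact hETF s hs t ht
        · intro h
          by_cases hst : s = t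
          · subst hst; exact absurd h (hirrT _)
          · rcases htour s t hst with h' | h'
            · exact h'
            · exact absurd (hETF t ht s hs h') (horT _ _ h)
      have hinjF : Set.InjOn (F a) ↑B := by
        intro s hs t ht hst
        by_contra hne
        have hs' : φ a s ∈ A := (hmem s).mp (Finset.mem_coe.mp hs)
        have ht' : φ a t ∈ A := (hmem t).mp (Finset.mem_coe.mp ht)
        have heq : f (φ a s) = f (φ a t) := by
          rw [← hFA a ha s hs', ← hFA a ha t ht', hst]
        rcases htour s t hne with h | h
        · have h2 := hf _ hs' _ ht' ((hiff a s t).mp h)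
          rw [heq] at h2; exact hirrV _ h2
        · have h2 := hf _ ht' _ hs' ((hiff a t s).mp h)
          rw [heq] at h2; exact hirrV _ h2
      obtain ⟨σ, hσ1, hσ2⟩ := hhom B (F a) hinjF hiffF
      exact ⟨σ, hσ1, fun _ t ht => hσ2 t ((hmem t).mpr ht)⟩
    · exact ⟨Equiv.refl T, fun x y => by simp, fun h => absurd h ha⟩
  choose σ hσiff hσA using hσex
  have hrepR : ∀ v a, rep v = some a → R a v := fun v a h => (hrep_spec v a h).2
  refine ⟨fun v => match h : rep v with
    | some a => φ (f a) (σ a (inv a v (hrepR v a h)))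
    | none => v, ?_, ?_⟩
  · -- endomorphism
    intro x y hxy
    have hRxy : R x y := Relation.ReflTransGen.single (Or.inl hxy)
    have hrxy : rep x = rep y := hrep_congr x y hRxy
    dsimp only
    split
    · next a ha =>
      split
      · next a' ha' =>
        have haa : a = a' := by
          rw [hrxy, ha'] at ha
          exact (Option.some.inj ha).symm
        subst haa
        have hx' : φ a (inv a x (hrepR x a ha)) = x := hinvspec a x _
        have hy' : φ a (inv a y (hrepR y a ha')) = y := hinvspec a y _
        have hET : ET (inv a x (hrepR x a ha)) (inv a y (hrepR y a ha')) := by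
          apply (hiff a _ _).mpr
          rw [hx', hy']; exact hxy
        exact (hiff (f a) _ _).mp ((hσiff a _ _).mp hET)
      · next ha' =>
        rw [hrxy, ha'] at ha
        exact absurd ha (by simp)
    · next ha =>
      split
      · next a' ha' =>
        rw [hrxy, ha'] at ha
        exact absurd ha (by simp)
      · next => exact hxy
  · -- extends f
    intro x hx
    obtain ⟨a0, ha0⟩ := hrep_mem x hx
    dsimp only
    split
    · next a ha =>
      obtain ⟨haA, haR⟩ := hrep_spec x a ha
      have ht : φ a (inv a x (hrepR x a ha)) = x := hinvspec a x _
      have hmemt : φ a (inv a x (hrepR x a ha)) ∈ A := by rw [ht]; exact hx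
      rw [hσA a haA _ hmemt, hFA a haA _ hmemt, ht]
    · next ha => rw [ha0] at ha; exact absurd ha (by simp)
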